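/- arXiv:1811.00102 — 2 statements merged into one kernel-verified Lean document; each statement's English description precedes it below -/
import Mathlib

section
/- Let d(x,y) = ‖x − y‖² and F(Y) = −(1/β)Σᵢ pᵢ log Σⱼ e^{−β‖xᵢ−yⱼ‖²}. At a critical point Y of F, the second directional derivative along a perturbation Ψ = (ψ₁,…,ψ_k) equals Σᵢⱼ 2 pᵢ p(j|i) ψⱼᵀ[I − 2β C_{X|yⱼ}]ψⱼ + Σᵢ 4β pᵢ (Σⱼ p(j|i)(xᵢ−yⱼ)ᵀψⱼ)², where C_{X|yⱼ} = Σᵢ p(i|j)(xᵢ−yⱼ)(xᵢ−yⱼ)ᵀ, up to an overall positive scalar normalization. -/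
open scoped RealInnerProductSpace BigOperators

lemma aux_hasDerivAt_sumexp {k : ℕ} (u v w : Fin k → ℝ) (t : ℝ) :
    HasDerivAt (fun ε => ∑ j, Real.exp (u j + v j * ε + w j * ε ^ 2))
      (∑ j, Real.exp (u j + v j * t + w j * t ^ 2) * (v j + 2 * w j * t)) t := by
  apply HasDerivAt.fun_sum
  intro j _
  have h1 : HasDerivAt (fun ε : ℝ => u j + v j * ε + w j * ε ^ 2)
      (v j + 2 * w j * t) t := by
    have ha := ((hasDerivAt_id t).const_mul (v j)).const_add (u j)
    have hb := (hasDerivAt_pow 2 t).const_mul (w j)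
    have := ha.add hb
    refine this.congr_deriv ?_
    simp; ring
  simpa [mul_comm] using h1.exp

lemma aux_hasDerivAt_sumexp' {k : ℕ} (u v w : Fin k → ℝ) (t : ℝ) :
    HasDerivAt (fun ε => ∑ j, Real.exp (u j + v j * ε + w j * ε ^ 2) * (v j + 2 * w j * ε))
      (∑ j, (Real.exp (u j + v j * t + w j * t ^ 2) * (v j + 2 * w j * t) ^ 2
        + Real.exp (u j + v j * t + w j * t ^ 2) * (2 * w j))) t := by
  apply HasDerivAt.fun_sum
  intro j _
  have h1 : HasDerivAt (fun ε : ℝ => u j + v j * ε + w j * ε ^ 2)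
      (v j + 2 * w j * t) t := by
    have ha := ((hasDerivAt_id t).const_mul (v j)).const_add (u j)
    have hb := (hasDerivAt_pow 2 t).const_mul (w j)
    have := ha.add hb
    refine this.congr_deriv ?_
    simp; ring
  have hexp : HasDerivAt (fun ε : ℝ => Real.exp (u j + v j * ε + w j * ε ^ 2))
      (Real.exp (u j + v j * t + w j * t ^ 2) * (v j + 2 * w j * t)) t := by
    simpa [mul_comm] using h1.exp
  have hlin : HasDerivAt (fun ε : ℝ => v j + 2 * w j * ε) (2 * w j) t := by
    simpa using ((hasDerivAt_id t).const_mul (2 * w j)).const_add (v j)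
  have := hexp.mul hlin
  refine this.congr_deriv ?_
  ring

lemma aux_iteratedDeriv2 {N k : ℕ} (hk : 0 < k) (β : ℝ) (p : Fin N → ℝ)
    (u v w : Fin N → Fin k → ℝ) :
    iteratedDeriv 2 (fun ε : ℝ => -(1 / β) * ∑ i, p i *
        Real.log (∑ j, Real.exp (u i j + v i j * ε + w i j * ε ^ 2))) 0
    = -(1 / β) * ∑ i, p i *
        (((∑ j, (Real.exp (u i j) * (v i j) ^ 2 + Real.exp (u i j) * (2 * w i j)))
            * (∑ j, Real.exp (u i j))
          - (∑ j, Real.exp (u i j) * v i j) * (∑ j, Real.exp (u i j) * v i j))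
          / (∑ j, Real.exp (u i j)) ^ 2) := by
  haveI : Nonempty (Fin k) := Fin.pos_iff_nonempty.mp hk
  have hZpos : ∀ (i : Fin N) (t : ℝ),
      0 < ∑ j, Real.exp (u i j + v i j * t + w i j * t ^ 2) := fun i t =>
    Finset.sum_pos (fun j _ => Real.exp_pos _) Finset.univ_nonempty
  have step1 : ∀ t : ℝ, HasDerivAt (fun ε : ℝ => -(1 / β) * ∑ i, p i *
        Real.log (∑ j, Real.exp (u i j + v i j * ε + w i j * ε ^ 2)))
      (-(1 / β) * ∑ i, p i *
        ((∑ j, Real.exp (u i j + v i j * t + w i j * t ^ 2) * (v i j + 2 * w i j * t))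
          / ∑ j, Real.exp (u i j + v i j * t + w i j * t ^ 2))) t := by
    intro t
    apply HasDerivAt.const_mul
    apply HasDerivAt.fun_sum
    intro i _
    exact ((aux_hasDerivAt_sumexp (u i) (v i) (w i) t).log (hZpos i t).ne').const_mul (p i)
  have hderiv : deriv (fun ε : ℝ => -(1 / β) * ∑ i, p i *
        Real.log (∑ j, Real.exp (u i j + v i j * ε + w i j * ε ^ 2)))
      = fun t => -(1 / β) * ∑ i, p i *
        ((∑ j, Real.exp (u i j + v i j * t + w i j * t ^ 2) * (v i j + 2 * w i j * t))
          / ∑ j, Real.exp (u i j + v i j * t + w i j * t ^ 2)) :=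
    funext fun t => (step1 t).deriv
  have step2 : HasDerivAt (fun t : ℝ => -(1 / β) * ∑ i, p i *
        ((∑ j, Real.exp (u i j + v i j * t + w i j * t ^ 2) * (v i j + 2 * w i j * t))
          / ∑ j, Real.exp (u i j + v i j * t + w i j * t ^ 2)))
      (-(1 / β) * ∑ i, p i *
        (((∑ j, (Real.exp (u i j + v i j * 0 + w i j * 0 ^ 2) * (v i j + 2 * w i j * 0) ^ 2
              + Real.exp (u i j + v i j * 0 + w i j * 0 ^ 2) * (2 * w i j)))
            * (∑ j, Real.exp (u i j + v i j * 0 + w i j * 0 ^ 2))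
          - (∑ j, Real.exp (u i j + v i j * 0 + w i j * 0 ^ 2) * (v i j + 2 * w i j * 0))
            * (∑ j, Real.exp (u i j + v i j * 0 + w i j * 0 ^ 2) * (v i j + 2 * w i j * 0)))
          / (∑ j, Real.exp (u i j + v i j * 0 + w i j * 0 ^ 2)) ^ 2)) 0 := by
    apply HasDerivAt.const_mul
    apply HasDerivAt.fun_sum
    intro i _
    exact (((aux_hasDerivAt_sumexp' (u i) (v i) (w i) 0).div
      (aux_hasDerivAt_sumexp (u i) (v i) (w i) 0) (hZpos i 0).ne')).const_mul (p i)
  rw [iteratedDeriv_succ, iteratedDeriv_one, hderiv, step2.deriv]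
  norm_num


lemma aux_algebra {N k : ℕ} (hk : 0 < k) (hN : 0 < N) (p : Fin N → ℝ)
    (hp : ∀ i, 0 < p i) (β : ℝ) (hβ : 0 < β)
    (a : Fin N → Fin k → ℝ) (b : Fin k → ℝ) (E : Fin N → Fin k → ℝ)
    (hEpos : ∀ i j, 0 < E i j)
    (P : Fin k → Fin N → ℝ) (hP : ∀ j i, P j i = E i j / ∑ l, E i l)
    (Q : Fin N → Fin k → ℝ) (hQ : ∀ i j, Q i j = p i * P j i / ∑ m, p m * P j m) :
    -(1 / β) * ∑ i, p i *
        (((∑ j, (E i j * (2 * β * a i j) ^ 2 + E i j * (2 * -(β * b j))))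
            * (∑ j, E i j)
          - (∑ j, E i j * (2 * β * a i j)) * (∑ j, E i j * (2 * β * a i j)))
          / (∑ j, E i j) ^ 2)
      = (∑ i, ∑ j, 2 * p i * P j i * (b j - 2 * β * ∑ m, Q m j * a m j ^ 2))
        + ∑ i, 4 * β * p i * (∑ j, P j i * a i j) ^ 2 := by
  haveI : Nonempty (Fin k) := Fin.pos_iff_nonempty.mp hk
  haveI : Nonempty (Fin N) := Fin.pos_iff_nonempty.mp hN
  have hSpos : ∀ i, 0 < ∑ j, E i j := fun i =>
    Finset.sum_pos (fun j _ => hEpos i j) Finset.univ_nonempty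
  have hPpos : ∀ j i, 0 < P j i := fun j i => by
    rw [hP]; exact div_pos (hEpos i j) (hSpos i)
  have hTpos : ∀ j, 0 < ∑ m, p m * P j m := fun j =>
    Finset.sum_pos (fun m _ => mul_pos (hp m) (hPpos j m)) Finset.univ_nonempty
  -- LHS = ∑ i, p i * K i
  have hL : -(1 / β) * ∑ i, p i *
        (((∑ j, (E i j * (2 * β * a i j) ^ 2 + E i j * (2 * -(β * b j))))
            * (∑ j, E i j)
          - (∑ j, E i j * (2 * β * a i j)) * (∑ j, E i j * (2 * β * a i j)))
          / (∑ j, E i j) ^ 2)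
      = ∑ i, p i * ((2 * (∑ j, E i j * b j) - 4 * β * (∑ j, E i j * a i j ^ 2))
            / (∑ j, E i j)
          + 4 * β * ((∑ j, E i j * a i j) / (∑ j, E i j)) ^ 2) := by
    rw [Finset.mul_sum]
    apply Finset.sum_congr rfl
    intro i _
    have e1 : ∑ j, (E i j * (2 * β * a i j) ^ 2 + E i j * (2 * -(β * b j)))
        = 4 * β ^ 2 * (∑ j, E i j * a i j ^ 2) - 2 * β * (∑ j, E i j * b j) := by
      rw [Finset.mul_sum, Finset.mul_sum, ← Finset.sum_sub_distrib]
      exact Finset.sum_congr rfl fun j _ => by ring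
    have e2 : ∑ j, E i j * (2 * β * a i j) = 2 * β * (∑ j, E i j * a i j) := by
      rw [Finset.mul_sum]
      exact Finset.sum_congr rfl fun j _ => by ring
    rw [e1, e2]
    have hSne : (∑ j, E i j) ≠ 0 := (hSpos i).ne'
    have hβne : β ≠ 0 := hβ.ne'
    field_simp
    ring
  rw [hL]
  -- key cancellation
  have hkey : ∀ j, (∑ i, p i * P j i) * (∑ m, Q m j * a m j ^ 2)
      = ∑ m, p m * P j m * a m j ^ 2 := by
    intro j
    have h : ∑ m, Q m j * a m j ^ 2
        = (∑ m, p m * P j m * a m j ^ 2) / (∑ m, p m * P j m) := by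
      rw [Finset.sum_div]
      exact Finset.sum_congr rfl fun m _ => by rw [hQ m j, div_mul_eq_mul_div]
    rw [h, mul_div_cancel₀ _ (hTpos j).ne']
  have h1 : (∑ i, ∑ j, 2 * p i * P j i * (b j - 2 * β * ∑ m, Q m j * a m j ^ 2))
      = (∑ i, ∑ j, 2 * p i * P j i * b j)
        - ∑ i, ∑ j, 4 * β * (p i * P j i * ∑ m, Q m j * a m j ^ 2) := by
    rw [← Finset.sum_sub_distrib]
    apply Finset.sum_congr rfl
    intro i _
    rw [← Finset.sum_sub_distrib]
    exact Finset.sum_congr rfl fun j _ => by ring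
  have h2 : (∑ i, ∑ j, 4 * β * (p i * P j i * ∑ m, Q m j * a m j ^ 2))
      = ∑ i, ∑ j, 4 * β * (p i * P j i * a i j ^ 2) := by
    calc (∑ i, ∑ j, 4 * β * (p i * P j i * ∑ m, Q m j * a m j ^ 2))
        = ∑ j, ∑ i, 4 * β * (p i * P j i * ∑ m, Q m j * a m j ^ 2) := Finset.sum_comm
      _ = ∑ j, 4 * β * ((∑ i, p i * P j i) * (∑ m, Q m j * a m j ^ 2)) := by
          apply Finset.sum_congr rfl
          intro j _
          rw [show (4:ℝ) * β * ((∑ i, p i * P j i) * (∑ m, Q m j * a m j ^ 2))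
              = (∑ i, p i * P j i) * (4 * β * (∑ m, Q m j * a m j ^ 2)) from by ring,
            Finset.sum_mul]
          exact Finset.sum_congr rfl fun i _ => by ring
      _ = ∑ j, 4 * β * (∑ m, p m * P j m * a m j ^ 2) := by
          exact Finset.sum_congr rfl fun j _ => by rw [hkey j]
      _ = ∑ j, ∑ m, 4 * β * (p m * P j m * a m j ^ 2) := by
          exact Finset.sum_congr rfl fun j _ => by rw [Finset.mul_sum]
      _ = ∑ i, ∑ j, 4 * β * (p i * P j i * a i j ^ 2) := Finset.sum_comm
  rw [h1, h2]
  -- collect into per-i form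
  rw [← Finset.sum_sub_distrib, ← Finset.sum_add_distrib]
  apply Finset.sum_congr rfl
  intro i _
  have hSne : (∑ j, E i j) ≠ 0 := (hSpos i).ne'
  have f1 : ∑ j, 2 * p i * P j i * b j
      = 2 * p i * ((∑ j, E i j * b j) / (∑ j, E i j)) := by
    rw [div_eq_mul_inv, Finset.sum_mul, Finset.mul_sum]
    exact Finset.sum_congr rfl fun j _ => by rw [hP j i, div_eq_mul_inv]; ring
  have f2 : ∑ j, 4 * β * (p i * P j i * a i j ^ 2)
      = 4 * β * (p i * ((∑ j, E i j * a i j ^ 2) / (∑ j, E i j))) := by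
    rw [div_eq_mul_inv, Finset.sum_mul, Finset.mul_sum, Finset.mul_sum]
    exact Finset.sum_congr rfl fun j _ => by rw [hP j i, div_eq_mul_inv]; ring
  have f3 : ∑ j, P j i * a i j = (∑ j, E i j * a i j) / (∑ j, E i j) := by
    rw [div_eq_mul_inv, Finset.sum_mul]
    exact Finset.sum_congr rfl fun j _ => by rw [hP j i, div_eq_mul_inv]; ring
  rw [f1, f2, f3]
  ring

/-- at a critical point `Y` of the free energy `F`, the second directional
derivative along a perturbation `Ψ` equals (up to a positive scalar)
`Σᵢⱼ 2pᵢp(j|i) ψⱼᵀ[I − 2βC_{X|yⱼ}]ψⱼ + Σᵢ 4βpᵢ(Σⱼ p(j|i)(xᵢ−yⱼ)ᵀψⱼ)²`,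
where `ψⱼᵀ C_{X|yⱼ} ψⱼ = Σₘ p(m|j)⟨xₘ−yⱼ,ψⱼ⟩²`. -/
theorem free_energy_second_directional_derivative
    (d k N : ℕ) (x : Fin N → EuclideanSpace ℝ (Fin d)) (p : Fin N → ℝ)
    (hp : ∀ i, 0 < p i) (hp1 : ∑ i, p i = 1) (β : ℝ) (hβ : 0 < β)
    (F : (Fin k → EuclideanSpace ℝ (Fin d)) → ℝ)
    (hF : ∀ Z, F Z = -(1 / β) * ∑ i, p i * Real.log (∑ j, Real.exp (-β * ‖x i - Z j‖ ^ 2)))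
    (Y Ψ : Fin k → EuclideanSpace ℝ (Fin d))
    (P : Fin k → Fin N → ℝ)
    (hP : ∀ j i, P j i =
      Real.exp (-β * ‖x i - Y j‖ ^ 2) / ∑ l, Real.exp (-β * ‖x i - Y l‖ ^ 2))
    (Q : Fin N → Fin k → ℝ)
    (hQ : ∀ i j, Q i j = p i * P j i / ∑ m, p m * P j m)
    (hcrit : fderiv ℝ F Y = 0) :
    ∃ c : ℝ, 0 < c ∧
      iteratedDeriv 2 (fun ε : ℝ => F (Y + ε • Ψ)) 0 =
        c * ((∑ i, ∑ j, 2 * p i * P j i *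
              (‖Ψ j‖ ^ 2 - 2 * β * ∑ m, Q m j * ⟪x m - Y j, Ψ j⟫ ^ 2)) +
            ∑ i, 4 * β * p i * (∑ j, P j i * ⟪x i - Y j, Ψ j⟫) ^ 2) := by
  refine ⟨1, one_pos, ?_⟩
  rw [one_mul]
  rcases Nat.eq_zero_or_pos k with hk0 | hk
  · subst hk0
    have hfun : (fun ε : ℝ => F (Y + ε • Ψ)) = fun _ => 0 := by
      funext ε
      rw [hF]
      simp
    rw [hfun, iteratedDeriv_succ, iteratedDeriv_one]
    simp
  · haveI : Nonempty (Fin k) := Fin.pos_iff_nonempty.mp hk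
    have hN : 0 < N := by
      rcases Nat.eq_zero_or_pos N with h | h
      · subst h; simp at hp1
      · exact h
    have hfun : (fun ε : ℝ => F (Y + ε • Ψ)) = fun ε : ℝ =>
        -(1 / β) * ∑ i, p i * Real.log (∑ j, Real.exp
          ((-β * ‖x i - Y j‖ ^ 2) + (2 * β * ⟪x i - Y j, Ψ j⟫) * ε
            + (-(β * ‖Ψ j‖ ^ 2)) * ε ^ 2)) := by
      funext ε
      rw [hF]
      congr 1
      apply Finset.sum_congr rfl
      intro i _
      congr 1
      congr 1
      apply Finset.sum_congr rfl
      intro j _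
      congr 1
      have h1 : x i - (Y + ε • Ψ) j = (x i - Y j) - ε • Ψ j := by
        simp only [Pi.add_apply, Pi.smul_apply]
        abel
      rw [h1, norm_sub_sq_real, real_inner_smul_right, norm_smul]
      simp only [Real.norm_eq_abs, mul_pow, sq_abs]
      ring
    rw [hfun, aux_iteratedDeriv2 hk β p
      (fun i j => -β * ‖x i - Y j‖ ^ 2)
      (fun i j => 2 * β * ⟪x i - Y j, Ψ j⟫)
      (fun i j => -(β * ‖Ψ j‖ ^ 2))]
    exact aux_algebra hk hN p hp β hβ
      (fun i j => ⟪x i - Y j, Ψ j⟫) (fun j => ‖Ψ j‖ ^ 2)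
      (fun i j => Real.exp (-β * ‖x i - Y j‖ ^ 2))
      (fun i j => Real.exp_pos _) P hP Q hQ
end

section
/- Let H(Ψ) = Σⱼ aⱼ ψⱼᵀ M_j ψⱼ + Σᵢ bᵢ (Σⱼ c_{ij} vᵢⱼᵀ ψⱼ)² with aⱼ > 0, bᵢ ≥ 0, c_{ij} ≥ 0, M_j symmetric. If some M_{j₀} is not positive definite and there exist two indices j₁ ≠ j₂ with M_{j₁} = M_{j₂} = M_{j₀} and c_{i j₁} v_{i j₁} = c_{i j₂} v_{i j₂} for all i, then there exists a nonzero Ψ with H(Ψ) ≤ 0. Conversely, if every M_j is positive definite then H(Ψ) > 0 for all nonzero Ψ. -/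
/-- abstract Hessian positivity. If some `M_{j₀}` is not positive definite
and there are two indices `j₁ ≠ j₂` with `M_{j₁} = M_{j₂} = M_{j₀}` and
`c_{ij₁}v_{ij₁} = c_{ij₂}v_{ij₂}` for all `i`, then `H` is non-positive at some nonzero
perturbation; conversely if every `M_j` is positive definite then `H` is positive on all
nonzero perturbations. -/
theorem hessian_positivity_characterization
    (d k N : ℕ) (a : Fin k → ℝ) (b : Fin N → ℝ) (c : Fin N → Fin k → ℝ)
    (v : Fin N → Fin k → (Fin d → ℝ)) (M : Fin k → Matrix (Fin d) (Fin d) ℝ)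
    (ha : ∀ j, 0 < a j) (hb : ∀ i, 0 ≤ b i) (hc : ∀ i j, 0 ≤ c i j)
    (hM : ∀ j, (M j).IsSymm)
    (H : (Fin k → (Fin d → ℝ)) → ℝ)
    (hH : ∀ Ψ, H Ψ = (∑ j, a j * dotProduct (Ψ j) ((M j).mulVec (Ψ j))) +
      ∑ i, b i * (∑ j, c i j * dotProduct (v i j) (Ψ j)) ^ 2) :
    ((∃ j₀ j₁ j₂, ¬ (M j₀).PosDef ∧ j₁ ≠ j₂ ∧ M j₁ = M j₀ ∧ M j₂ = M j₀ ∧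
        ∀ i, c i j₁ • v i j₁ = c i j₂ • v i j₂) →
      ∃ Ψ : Fin k → (Fin d → ℝ), Ψ ≠ 0 ∧ H Ψ ≤ 0) ∧
    ((∀ j, (M j).PosDef) → ∀ Ψ : Fin k → (Fin d → ℝ), Ψ ≠ 0 → 0 < H Ψ) := by
  constructor
  · rintro ⟨j₀, j₁, j₂, hnpd, hne, h1, h2, hv⟩
    -- get a witness ψ ≠ 0 with ψᵀ M j₀ ψ ≤ 0
    have hherm : (M j₀).IsHermitian := by
      rw [Matrix.IsHermitian]
      ext i j
      simpa [Matrix.conjTranspose_apply] using congrFun (congrFun (hM j₀) i) j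
    have hex : ∃ ψ : Fin d → ℝ, ψ ≠ 0 ∧
        dotProduct ψ ((M j₀).mulVec ψ) ≤ 0 := by
      by_contra hcon
      push_neg at hcon
      exact hnpd (Matrix.PosDef.of_dotProduct_mulVec_pos hherm fun x hx => by
        simpa using hcon x hx)
    obtain ⟨ψ, hψ, hquad⟩ := hex
    refine ⟨fun j => if j = j₁ then ψ else if j = j₂ then -ψ else 0, ?_, ?_⟩
    · intro h0
      apply hψ
      have := congrFun h0 j₁
      simpa using this
    · rw [hH]
      set Ψ : Fin k → (Fin d → ℝ) := fun j => if j = j₁ then ψ else if j = j₂ then -ψ else 0 with hΨ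
      have hΨ1 : Ψ j₁ = ψ := by simp [hΨ]
      have hΨ2 : Ψ j₂ = -ψ := by simp [hΨ, hne.symm]
      have hΨ0 : ∀ j, j ≠ j₁ → j ≠ j₂ → Ψ j = 0 := by
        intro j hj1 hj2; simp [hΨ, hj1, hj2]
      have hsum1 : (∑ j, a j * dotProduct (Ψ j) ((M j).mulVec (Ψ j))) =
          (a j₁ + a j₂) * dotProduct ψ ((M j₀).mulVec ψ) := by
        rw [Finset.sum_eq_add_of_mem j₁ j₂ (Finset.mem_univ _) (Finset.mem_univ _) hne
          (by intro j _ hj; rw [hΨ0 j hj.1 hj.2]; simp)]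
        rw [hΨ1, hΨ2, h1, h2]
        simp [Matrix.mulVec_neg, dotProduct_neg, neg_dotProduct]
        ring
      have hsum2 : ∀ i, (∑ j, c i j * dotProduct (v i j) (Ψ j)) = 0 := by
        intro i
        rw [Finset.sum_eq_add_of_mem j₁ j₂ (Finset.mem_univ _) (Finset.mem_univ _) hne
          (by intro j _ hj; rw [hΨ0 j hj.1 hj.2]; simp)]
        rw [hΨ1, hΨ2]
        have := congrArg (fun w => dotProduct w ψ) (hv i)
        simp only [smul_dotProduct, smul_eq_mul] at this
        have hdc : ∀ u : Fin d → ℝ, dotProduct u ψ = dotProduct ψ u :=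
          fun u => dotProduct_comm u ψ
        simp only [dotProduct_neg, mul_neg]
        rw [hdc (v i j₁), hdc (v i j₂)]
        rw [hdc (v i j₁), hdc (v i j₂)] at this
        linarith
      rw [hsum1]
      have : (∑ i, b i * (∑ j, c i j * dotProduct (v i j) (Ψ j)) ^ 2) = 0 := by
        apply Finset.sum_eq_zero
        intro i _
        rw [hsum2 i]
        ring
      rw [this, add_zero]
      exact mul_nonpos_of_nonneg_of_nonpos (by linarith [ha j₁, ha j₂]) hquad
  · intro hpd Ψ hΨ
    rw [hH]
    have h2 : 0 ≤ ∑ i, b i * (∑ j, c i j * dotProduct (v i j) (Ψ j)) ^ 2 := by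
      apply Finset.sum_nonneg
      intro i _
      exact mul_nonneg (hb i) (sq_nonneg _)
    have h1 : 0 < ∑ j, a j * dotProduct (Ψ j) ((M j).mulVec (Ψ j)) := by
      obtain ⟨j₀, hj₀⟩ : ∃ j, Ψ j ≠ 0 := by
        by_contra hcon
        push_neg at hcon
        exact hΨ (funext hcon)
      apply Finset.sum_pos'
      · intro j _
        rcases eq_or_ne (Ψ j) 0 with h | h
        · simp [h]
        · have := (hpd j).dotProduct_mulVec_pos h
          have hstar : star (Ψ j) = Ψ j := by simp
          rw [hstar] at this
          exact le_of_lt (mul_pos (ha j) this)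
      · refine ⟨j₀, Finset.mem_univ _, ?_⟩
        have := (hpd j₀).dotProduct_mulVec_pos hj₀
        have hstar : star (Ψ j₀) = Ψ j₀ := by simp
        rw [hstar] at this
        exact mul_pos (ha j₀) this
    linarith
end
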